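/- Calibrability of the annular facet: Let n ≥ 1 and 0 < R₊ < R₋. Set b := (R₋^{n−1} − R₊^{n−1})/(R₋^n − R₊^n), a := (R₊ R₋)^{n−1} (R₋ − R₊)/(R₋^n − R₊^n), θ(ρ) := a ρ^{1−n} + b ρ for ρ > 0, and z(x) := −θ(‖x‖) x/‖x‖ for x ∈ ℝ^n \ {0}. Then: (a) θ(R₊) = θ(R₋) = 1, and 0 < θ(ρ) ≤ 1 for every ρ ∈ [R₊, R₋]; consequently ‖z(x)‖ ≤ 1 for all x with R₊ ≤ ‖x‖ ≤ R₋, and ⟨z(x), x/‖x‖⟩ = −1 whenever ‖x‖ = R₊ or ‖x‖ = R₋; (b) z is smooth on ℝ^n \ {0} and div z(x) = −n b = n (R₊^{n−1} − R₋^{n−1})/(R₋^n − R₊^n) for every x ≠ 0, a constant. -/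

import Mathlib

open Real

lemma aux_trace_smulRight {E : Type*} [AddCommGroup E] [Module ℝ E] [FiniteDimensional ℝ E]
    (l : E →ₗ[ℝ] ℝ) (y : E) : LinearMap.trace ℝ E (l.smulRight y) = l y := by
  classical
  let b := Module.finBasis ℝ E
  rw [LinearMap.trace_eq_matrix_trace ℝ b, Matrix.trace]
  conv_rhs => rw [← b.sum_repr y]
  rw [map_sum]
  refine Finset.sum_congr rfl fun i _ => ?_
  simp [Matrix.diag, LinearMap.toMatrix_apply, mul_comm]

lemma aux_hasFDerivAt_norm {E : Type*} [NormedAddCommGroup E] [InnerProductSpace ℝ E] {x : E}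
    (hx : x ≠ 0) : HasFDerivAt (fun y : E => ‖y‖) (‖x‖⁻¹ • innerSL ℝ x) x := by
  have h1 : HasFDerivAt (fun y : E => ‖y‖ ^ 2) (2 • innerSL ℝ x) x := by
    simpa using (hasFDerivAt_id x).norm_sq
  have hxn : (‖x‖ : ℝ) ≠ 0 := norm_ne_zero_iff.mpr hx
  have hx2 : (‖x‖ : ℝ) ^ 2 ≠ 0 := pow_ne_zero 2 hxn
  have h2 := h1.sqrt hx2
  have hfun : (fun y : E => Real.sqrt (‖y‖ ^ 2)) = fun y : E => ‖y‖ :=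
    funext fun y => Real.sqrt_sq (norm_nonneg y)
  rw [hfun] at h2
  convert h2 using 1
  ext v
  simp only [Real.sqrt_sq (norm_nonneg x), ContinuousLinearMap.smul_apply, smul_eq_mul,
    Nat.cast_smul_eq_nsmul, ContinuousLinearMap.coe_smul', Pi.smul_apply]
  push_cast [nsmul_eq_mul]
  field_simp

theorem annulus_calibrable (n : ℕ) (hn : 1 ≤ n) (Rp Rm : ℝ) (hRp : 0 < Rp) (hRR : Rp < Rm)
    (b a : ℝ)
    (hb : b = (Rm ^ (n - 1) - Rp ^ (n - 1)) / (Rm ^ n - Rp ^ n))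
    (ha : a = (Rp * Rm) ^ (n - 1) * (Rm - Rp) / (Rm ^ n - Rp ^ n))
    (θ : ℝ → ℝ) (hθ : ∀ ρ : ℝ, θ ρ = a * (ρ ^ (n - 1))⁻¹ + b * ρ)
    (z : EuclideanSpace ℝ (Fin n) → EuclideanSpace ℝ (Fin n))
    (hz : ∀ x : EuclideanSpace ℝ (Fin n), z x = -(θ ‖x‖ * ‖x‖⁻¹) • x) :
    (θ Rp = 1 ∧ θ Rm = 1) ∧
    (∀ ρ ∈ Set.Icc Rp Rm, 0 < θ ρ ∧ θ ρ ≤ 1) ∧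
    (∀ x : EuclideanSpace ℝ (Fin n), Rp ≤ ‖x‖ → ‖x‖ ≤ Rm → ‖z x‖ ≤ 1) ∧
    (∀ x : EuclideanSpace ℝ (Fin n), ‖x‖ = Rp ∨ ‖x‖ = Rm →
      (inner ℝ (z x) (‖x‖⁻¹ • x) : ℝ) = -1) ∧
    ContDiffOn ℝ (⊤ : ℕ∞) z {(0 : EuclideanSpace ℝ (Fin n))}ᶜ ∧
    (∀ x : EuclideanSpace ℝ (Fin n), x ≠ 0 →
      LinearMap.trace ℝ (EuclideanSpace ℝ (Fin n)) (fderiv ℝ z x).toLinearMap =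
        -((n : ℝ) * b)) ∧
    -((n : ℝ) * b) = (n : ℝ) * (Rp ^ (n - 1) - Rm ^ (n - 1)) / (Rm ^ n - Rp ^ n) := by
  obtain ⟨m, rfl⟩ : ∃ m, n = m + 1 := ⟨n - 1, by omega⟩
  simp only [Nat.add_sub_cancel] at hb ha hθ ⊢
  have hRm : (0 : ℝ) < Rm := hRp.trans hRR
  have hD : (0 : ℝ) < Rm ^ (m + 1) - Rp ^ (m + 1) :=
    sub_pos.mpr (pow_lt_pow_left₀ hRR hRp.le (by omega))
  have hDne : Rm ^ (m + 1) - Rp ^ (m + 1) ≠ 0 := hD.ne'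
  have ha' : 0 < a := by
    rw [ha]
    have hsub : (0:ℝ) < Rm - Rp := sub_pos.mpr hRR
    have : (0:ℝ) < (Rp * Rm) ^ m * (Rm - Rp) := by positivity
    exact div_pos this hD
  have hb' : 0 ≤ b := by
    rw [hb]
    exact div_nonneg (sub_nonneg.mpr (pow_le_pow_left₀ hRp.le hRR.le m)) hD.le
  have hθRp : θ Rp = 1 := by
    rw [hθ, ha, hb]
    field_simp
    ring
  have hθRm : θ Rm = 1 := by
    rw [hθ, ha, hb]
    field_simp
    ring
  have hIcc : ∀ ρ ∈ Set.Icc Rp Rm, 0 < θ ρ ∧ θ ρ ≤ 1 := by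
    intro ρ hρmem
    have hρ : 0 < ρ := hRp.trans_le hρmem.1
    constructor
    · rw [hθ]
      exact add_pos_of_pos_of_nonneg (mul_pos ha' (inv_pos.mpr (pow_pos hρ m)))
        (mul_nonneg hb' hρ.le)
    · have hconv : ConvexOn ℝ (Set.Ioi (0:ℝ)) θ := by
        have h0 : θ = fun ρ => a • (ρ ^ (-(m:ℤ))) + b • ρ := funext fun ρ => by
          rw [hθ, zpow_neg, zpow_natCast]; simp [smul_eq_mul]
        rw [h0]
        exact ((convexOn_zpow (-(m:ℤ))).smul ha'.le).add
          ((convexOn_id (convex_Ioi 0)).smul hb')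
      have hseg : ρ ∈ segment ℝ Rp Rm := by
        rw [segment_eq_Icc hRR.le]; exact hρmem
      obtain ⟨u, v, hu, hv, huv, rfl⟩ := hseg
      calc θ (u • Rp + v • Rm) ≤ max (θ Rp) (θ Rm) :=
            hconv.le_on_segment' (Set.mem_Ioi.mpr hRp) (Set.mem_Ioi.mpr hRm) hu hv huv
        _ = 1 := by rw [hθRp, hθRm, max_self]
  refine ⟨⟨hθRp, hθRm⟩, hIcc, ?_, ?_, ?_, ?_, ?_⟩
  · intro x h1 h2
    have hr : 0 < ‖x‖ := hRp.trans_le h1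
    have hθx := hIcc ‖x‖ ⟨h1, h2⟩
    rw [hz x, norm_smul, Real.norm_eq_abs, abs_neg,
      abs_of_pos (mul_pos hθx.1 (inv_pos.mpr hr)), mul_assoc, inv_mul_cancel₀ hr.ne', mul_one]
    exact hθx.2
  · intro x hx
    have hr : 0 < ‖x‖ := by rcases hx with h | h <;> rw [h] <;> [exact hRp; exact hRm]
    have hθx : θ ‖x‖ = 1 := by rcases hx with h | h <;> rw [h] <;> [exact hθRp; exact hθRm]
    rw [hz x, real_inner_smul_left, real_inner_smul_right, real_inner_self_eq_norm_sq, hθx]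
    field_simp
  · have hzf : z = fun x : EuclideanSpace ℝ (Fin (m + 1)) => -(θ ‖x‖ * ‖x‖⁻¹) • x := funext hz
    rw [hzf]
    intro x hx
    have hx0 : x ≠ 0 := hx
    have hrn : ‖x‖ ≠ 0 := norm_ne_zero_iff.mpr hx0
    apply ContDiffAt.contDiffWithinAt
    have hNorm : ContDiffAt ℝ (⊤ : ℕ∞) (fun y : EuclideanSpace ℝ (Fin (m + 1)) => ‖y‖) x := contDiffAt_norm ℝ hx0
    show ContDiffAt ℝ _ ((fun y : EuclideanSpace ℝ (Fin (m + 1)) => -(θ ‖y‖ * ‖y‖⁻¹)) • (id : EuclideanSpace ℝ (Fin (m + 1)) → _)) x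
    refine ContDiffAt.smul (ContDiffAt.neg ?_) contDiffAt_id
    have hθc : ContDiffAt ℝ (⊤ : ℕ∞) (fun y : EuclideanSpace ℝ (Fin (m + 1)) => θ ‖y‖) x := by
      have heq : (fun y : EuclideanSpace ℝ (Fin (m + 1)) => θ ‖y‖) = fun y : EuclideanSpace ℝ (Fin (m + 1)) => a * (‖y‖ ^ m)⁻¹ + b * ‖y‖ :=
        funext fun y => hθ _
      rw [heq]
      exact (contDiffAt_const.mul ((hNorm.pow m).inv (pow_ne_zero m hrn))).add
        (contDiffAt_const.mul hNorm)
    exact hθc.mul (hNorm.inv hrn)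
  · intro x hx0
    have hrn : ‖x‖ ≠ 0 := norm_ne_zero_iff.mpr hx0
    set r : ℝ := ‖x‖ with hrdef
    set k : ℤ := -((m + 1 : ℕ) : ℤ) with hkdef
    set φ : ℝ → ℝ := fun ρ => -(a * ρ ^ k + b) with hφdef
    have hzloc : ∀ y : EuclideanSpace ℝ (Fin (m + 1)), y ≠ 0 → z y = φ ‖y‖ • y := by
      intro y hy
      have hyn : ‖y‖ ≠ 0 := norm_ne_zero_iff.mpr hy
      rw [hz y, hθ]
      congr 1
      rw [hφdef]
      simp only [hkdef, zpow_neg, zpow_natCast]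
      rw [pow_succ]
      field_simp
    set d : ℝ := -(a * ((k : ℝ) * r ^ (k - 1))) with hddef
    have hφd : HasDerivAt φ d r := by
      have h1 := hasDerivAt_zpow k r (Or.inl hrn)
      exact ((h1.const_mul a).add_const b).neg
    have hN : HasFDerivAt (fun y : EuclideanSpace ℝ (Fin (m + 1)) => ‖y‖) (r⁻¹ • innerSL ℝ x) x := aux_hasFDerivAt_norm hx0
    have hc : HasFDerivAt (fun y : EuclideanSpace ℝ (Fin (m + 1)) => φ ‖y‖) (d • (r⁻¹ • innerSL ℝ x)) x :=
      HasDerivAt.comp_hasFDerivAt (h₂ := φ) (f := fun y : EuclideanSpace ℝ (Fin (m + 1)) => ‖y‖) x hφd hN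
    have hzx : HasFDerivAt (fun y : EuclideanSpace ℝ (Fin (m + 1)) => φ ‖y‖ • y)
        (φ r • ContinuousLinearMap.id ℝ (EuclideanSpace ℝ (Fin (m + 1))) + (d • (r⁻¹ • innerSL ℝ x)).smulRight x) x :=
      hc.smul (hasFDerivAt_id x)
    have hz' : z =ᶠ[nhds x] fun y : EuclideanSpace ℝ (Fin (m + 1)) => φ ‖y‖ • y := by
      filter_upwards [isOpen_compl_singleton.mem_nhds (by exact hx0 :
        x ∈ ({0} : Set (EuclideanSpace ℝ (Fin (m + 1))))ᶜ)] with y hy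
      exact hzloc y hy
    have hfd : fderiv ℝ z x
        = φ r • ContinuousLinearMap.id ℝ (EuclideanSpace ℝ (Fin (m + 1))) + (d • (r⁻¹ • innerSL ℝ x)).smulRight x :=
      (hzx.congr_of_eventuallyEq hz').fderiv
    rw [hfd]
    have hLM : (φ r • ContinuousLinearMap.id ℝ (EuclideanSpace ℝ (Fin (m + 1)))
          + (d • (r⁻¹ • innerSL ℝ x)).smulRight x).toLinearMap
        = φ r • (LinearMap.id : EuclideanSpace ℝ (Fin (m + 1)) →ₗ[ℝ] EuclideanSpace ℝ (Fin (m + 1)))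
          + ((d * r⁻¹) • (innerSL ℝ x).toLinearMap).smulRight x := by
      ext v
      simp [smul_smul, mul_comm, mul_assoc]
    rw [hLM, map_add, map_smul, LinearMap.trace_id, aux_trace_smulRight]
    have hfr : (Module.finrank ℝ (EuclideanSpace ℝ (Fin (m + 1))) : ℝ) = (m + 1 : ℝ) := by
      rw [finrank_euclideanSpace_fin]; push_cast; ring
    have hinner : ((d * r⁻¹) • (innerSL ℝ x).toLinearMap) x = d * r⁻¹ * r ^ 2 := by
      have hxx : (inner ℝ x x : ℝ) = r ^ 2 := real_inner_self_eq_norm_sq x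
      simp only [LinearMap.smul_apply, ContinuousLinearMap.coe_coe, innerSL_apply_apply, smul_eq_mul,
        hxx]
    rw [hinner, hfr]
    have hkk : r ^ (k - 1) * r = r ^ k := by
      rw [zpow_sub_one₀ hrn]
      field_simp
    have expand : d * r⁻¹ * r ^ 2 = d * r := by
      field_simp
    rw [expand]
    have hdr : d * r = a * (m + 1 : ℝ) * r ^ k := by
      rw [hddef]
      have : -(a * ((k : ℝ) * r ^ (k - 1))) * r = -(a * (k : ℝ) * (r ^ (k - 1) * r)) := by ring
      rw [this, hkk, hkdef]
      push_cast
      ring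
    rw [hdr, hφdef]
    simp only [smul_eq_mul]
    push_cast
    ring
  · rw [hb]
    field_simp
    ring
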